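/- Let q be an odd prime power, let (a,b) be a valid pair in F_q^2, and let i ∈ {1,2,3}. Then Atp_i(Q_{a,b}) contains an element whose order (as a permutation of F_q) is exactly (q-1)/2. -/
import Mathlib


open scoped Classical
open Finset

noncomputable section

variable {F : Type*} [Field F] [Fintype F]

/-- `x ∈ R_q`: `x` is a nonzero square in `F`. -/
def inR (x : F) : Prop := x ≠ 0 ∧ IsSquare x

/-- `x ∈ N_q`: `x` is a nonzero non-square in `F`. -/
def inN (x : F) : Prop := x ≠ 0 ∧ ¬ IsSquare x

/-- `(a, b)` is a valid pair: `ab ∈ R_q` and `(a-1)(b-1) ∈ R_q`. -/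
def ValidPair (a b : F) : Prop := inR (a * b) ∧ inR ((a - 1) * (b - 1))

/-- The operation of the quadratic quasigroup `Q_{a,b}`:
`x*y = x + a(y-x)` if `y - x ∈ R_q`, `x*y = x + b(y-x)` if `y - x ∈ N_q`, and `x*x = x`. -/
def qmul (a b x y : F) : F :=
  if inR (y - x) then x + a * (y - x) else x + b * (y - x)

/-- `(α, β, γ)` is an autotopism of the quadratic quasigroup `Q_{a,b}`. -/
def IsAutotopism (a b : F) (α β γ : Equiv.Perm F) : Prop :=
  ∀ x y : F, qmul a b (α x) (β y) = γ (qmul a b x y)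

/-- `Atp_i(Q_{a,b})`: the projection of the autotopism group of `Q_{a,b}` onto its
`i`-th coordinate (for `i : Fin 3`). -/
def AtpProj (a b : F) (i : Fin 3) : Set (Equiv.Perm F) :=
  {δ | ∃ α β γ : Equiv.Perm F, IsAutotopism a b α β γ ∧ δ = ![α, β, γ] i}

/-- A permutation of `F_q` is affine (an element of `AGL_d(p)`) if it has the form
`x ↦ ψ(x) + c` for an additive bijection `ψ` and a constant `c`. -/
def IsAffinePerm (f : Equiv.Perm F) : Prop :=
  ∃ (ψ : F ≃+ F) (c : F), ∀ x : F, f x = ψ x + c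

/-- A set of permutations of `F_q` is 2-transitive. -/
def TwoTransitive (G : Set (Equiv.Perm F)) : Prop :=
  ∀ x₁ y₁ x₂ y₂ : F, x₁ ≠ y₁ → x₂ ≠ y₂ → ∃ g ∈ G, g x₁ = x₂ ∧ g y₁ = y₂


omit [Fintype F] in
lemma isSquare_mul_left_iff' {s t : F} (hs : s ≠ 0) (h2 : IsSquare s) :
    IsSquare (s * t) ↔ IsSquare t := by
  obtain ⟨r, hr⟩ := h2
  have hr0 : r ≠ 0 := by rintro rfl; simp at hr; exact hs hr
  constructor
  · rintro ⟨c, hc⟩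
    exact ⟨c / r, by field_simp at hc ⊢; rw [hr] at hc; linear_combination hc⟩
  · rintro ⟨c, hc⟩
    exact ⟨r * c, by rw [hr, hc]; ring⟩

omit [Fintype F] in
lemma inR_mul_left' {s t : F} (hs : s ≠ 0) (h2 : IsSquare s) :
    inR (s * t) ↔ inR t := by
  unfold inR
  rw [isSquare_mul_left_iff' hs h2, mul_ne_zero_iff]
  tauto

omit [Fintype F] in
lemma qmul_smul' (a b s x y : F) (hs : s ≠ 0) (h2 : IsSquare s) :
    qmul a b (s * x) (s * y) = s * qmul a b x y := by
  have key : s * y - s * x = s * (y - x) := by ring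
  unfold qmul
  rw [key, inR_mul_left' hs h2]
  split <;> ring

/-- Lemma 5.4: for each `i ∈ {1,2,3}`, `Atp_i(Q_{a,b})` contains an element of order
exactly `(q-1)/2`. -/
theorem atp_proj_element_of_order
    (hodd : Odd (Fintype.card F)) (a b : F) (hv : ValidPair a b) (i : Fin 3) :
    ∃ g ∈ AtpProj a b i, orderOf g = (Fintype.card F - 1) / 2 := by
  obtain ⟨u, hu⟩ := IsCyclic.exists_generator (α := Fˣ)
  have hou : orderOf u = Fintype.card F - 1 := by
    rw [orderOf_eq_card_of_forall_mem_zpowers hu, Nat.card_eq_fintype_card,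
      Fintype.card_units]
  set g : Equiv.Perm F := MulAction.toPermHom Fˣ F (u ^ 2) with hg
  have hgapp : ∀ x : F, g x = ((u : F) ^ 2) * x := fun x => by
    simp [hg, MulAction.toPermHom, Units.smul_def]
  have hs0 : ((u : F) ^ 2) ≠ 0 := pow_ne_zero _ (Units.ne_zero u)
  have hsq : IsSquare ((u : F) ^ 2) := ⟨(u : F), sq (u : F)⟩
  refine ⟨g, ⟨g, g, g, ?_, ?_⟩, ?_⟩
  · intro x y
    rw [hgapp, hgapp, hgapp, qmul_smul' a b _ x y hs0 hsq]
  · fin_cases i <;> rfl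
  · have hinj : Function.Injective (MulAction.toPermHom Fˣ F) :=
      MulAction.toPerm_injective
    rw [hg, orderOf_injective _ hinj, orderOf_pow, hou]
    have heven : Even (Fintype.card F - 1) := Nat.Odd.sub_odd hodd odd_one
    have h2 : Nat.gcd (Fintype.card F - 1) 2 = 2 := by
      rw [Nat.gcd_comm]
      exact Nat.gcd_eq_left ((even_iff_two_dvd).mp heven)
    rw [h2]
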